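/- With the graph G_c constructed from a bipartite graph H = (A ⊔ B, E) with colorings α : A → [Δs], β : B → [d] and parameters c, t, Δ, s as in the context, assume s ≥ 2, assume that for every color b ∈ [d] the set {v ∈ B : β(v) = b} is nonempty, and let m be a natural number such that every (Δ(s−1)+1)-element subset of A has at most m common neighbors in B. Assume further the numerical conditions: c·d^c/(3t) ≤ d^{1/(2Δs)}, m ≤ d^{1/(2s)}/3, and c·d^c + c·Δ^c·s^c·d^{c − 1/2 + 1/(2s)} < 2·Δ^c·d^c. Then every dominating set of G_c has size strictly greater than c·d^c/3. -/

import Mathlib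

open Finset

lemma count_one {n k : ℕ} (ℓ : Fin n) (W : Finset (Fin k)) :
    ((Finset.univ : Finset (Fin n → Fin k)).filter (fun f => f ℓ ∈ W)).card
      ≤ W.card * k ^ (n - 1) := by
  classical
  have hsub : Fintype.card {x : Fin n // x ≠ ℓ} = n - 1 := by
    simp [Fintype.card_subtype_compl, Fintype.card_subtype_eq]
  have h := Finset.card_le_card_of_injOn
    (f := fun f : Fin n → Fin k => ((f ℓ), (fun x : {x : Fin n // x ≠ ℓ} => f x.1)))
    (s := (Finset.univ : Finset (Fin n → Fin k)).filter (fun f => f ℓ ∈ W))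
    (t := W ×ˢ (Finset.univ : Finset ({x : Fin n // x ≠ ℓ} → Fin k)))
    (by intro f hf; simp only [Finset.mem_coe, Finset.mem_filter] at hf
        simp [hf.2])
    (by intro f hf g hg hfg
        simp only [Prod.mk.injEq] at hfg
        funext x
        by_cases hx : x = ℓ
        · subst hx; exact hfg.1
        · exact congrFun hfg.2 ⟨x, hx⟩)
  calc _ ≤ (W ×ˢ (Finset.univ : Finset ({x : Fin n // x ≠ ℓ} → Fin k))).card := h
    _ = W.card * k ^ (n - 1) := by
        rw [Finset.card_product, Finset.card_univ, Fintype.card_fun, hsub, Fintype.card_fin]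

lemma count_two {n k : ℕ} (ℓ₁ ℓ₂ : Fin n) (hne : ℓ₁ ≠ ℓ₂) (W₁ W₂ : Finset (Fin k)) :
    ((Finset.univ : Finset (Fin n → Fin k)).filter
        (fun f => f ℓ₁ ∈ W₁ ∧ f ℓ₂ ∈ W₂)).card
      ≤ W₁.card * W₂.card * k ^ (n - 2) := by
  classical
  have hsub : Fintype.card {x : Fin n // ¬(x = ℓ₁ ∨ x = ℓ₂)} = n - 2 := by
    rw [Fintype.card_subtype_compl]
    congr 1
    · simp
    · rw [Fintype.card_subtype]
      have : (Finset.univ.filter (fun x : Fin n => x = ℓ₁ ∨ x = ℓ₂)) = {ℓ₁, ℓ₂} := by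
        ext x; simp
      rw [this, Finset.card_pair hne]
  have h := Finset.card_le_card_of_injOn
    (f := fun f : Fin n → Fin k =>
      ((f ℓ₁), (f ℓ₂), (fun x : {x : Fin n // ¬(x = ℓ₁ ∨ x = ℓ₂)} => f x.1)))
    (s := (Finset.univ : Finset (Fin n → Fin k)).filter
        (fun f => f ℓ₁ ∈ W₁ ∧ f ℓ₂ ∈ W₂))
    (t := W₁ ×ˢ W₂ ×ˢ (Finset.univ : Finset ({x : Fin n // ¬(x = ℓ₁ ∨ x = ℓ₂)} → Fin k)))
    (by intro f hf; simp only [Finset.mem_coe, Finset.mem_filter] at hf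
        simp [hf.2.1, hf.2.2])
    (by intro f hf g hg hfg
        simp only [Prod.mk.injEq] at hfg
        funext x
        by_cases hx1 : x = ℓ₁
        · subst hx1; exact hfg.1
        · by_cases hx2 : x = ℓ₂
          · subst hx2; exact hfg.2.1
          · exact congrFun hfg.2.2 ⟨x, by tauto⟩)
  calc _ ≤ _ := h
    _ = W₁.card * W₂.card * k ^ (n - 2) := by
        rw [Finset.card_product, Finset.card_product, Finset.card_univ, Fintype.card_fun,
          hsub, Fintype.card_fin, mul_assoc]



/-- A set `D` of vertices dominates a graph `G`: every vertex is in `D` or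
adjacent to a vertex of `D`. -/
def IsDominatingSet {V : Type*} (G : SimpleGraph V) (D : Set V) : Prop :=
  ∀ v : V, v ∈ D ∨ ∃ u ∈ D, G.Adj u v

/-- The vertex set of the graph `G_c`: the disjoint union of
`⋃_{i ∈ [d]^c} V_i = B^c` (a tuple `v ∈ B^c` lies in `V_i` for `i = β ∘ v`),
`C = A × [c] × [t]`, and `W = {w_{v,j,i} : v ∈ B^c, j ∈ [Δs]^c, i ∈ [t]}`. -/
abbrev GcVertex (A B : Type*) (c t Δ s : ℕ) : Type _ :=
  (Fin c → B) ⊕ ((A × Fin c × Fin t) ⊕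
    ((Fin c → B) × (Fin c → Fin (Δ * s)) × Fin t))

/-- The defining relation for the edges of `G_c` (to be symmetrized):
(E1) distinct `v, v'` of the same `V_i` (i.e. `β ∘ v = β ∘ v'`) are adjacent;
(E2) for `v, v'` in the same `V_i` with `v ℓ ≠ v' ℓ` for all `ℓ`, `w_{v,j,i}`
     is adjacent to `v'` for all `i ∈ [t]`, `j ∈ [Δs]^c`;
(E3) `(u, ℓ, i)` is adjacent to `w_{v,j,i}` if `E u (v ℓ)` and `j ℓ = α u`;
(E4) distinct `(u, ℓ, i), (u', ℓ, i)` with the same `ℓ, i` are adjacent. -/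
def gcRel {A B : Type*} (c t Δ s d : ℕ) (α : A → Fin (Δ * s))
    (β : B → Fin d) (E : A → B → Prop) :
    GcVertex A B c t Δ s → GcVertex A B c t Δ s → Prop
  | Sum.inl v, Sum.inl v' => v ≠ v' ∧ β ∘ v = β ∘ v'
  | Sum.inr (Sum.inr (v, _, _)), Sum.inl v' =>
      β ∘ v = β ∘ v' ∧ ∀ ℓ : Fin c, v ℓ ≠ v' ℓ
  | Sum.inr (Sum.inl (u, ℓ, i)), Sum.inr (Sum.inr (v, j, i')) =>
      i = i' ∧ E u (v ℓ) ∧ j ℓ = α u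
  | Sum.inr (Sum.inl (u, ℓ, i)), Sum.inr (Sum.inl (u', ℓ', i')) =>
      u ≠ u' ∧ ℓ = ℓ' ∧ i = i'
  | _, _ => False

/-- The graph `G_c` built from the bipartite graph `(A ⊔ B, E)` with colorings
`α : A → [Δs]`, `β : B → [d]` and parameters `c, t, Δ, s`. -/
def Gc {A B : Type*} (c t Δ s d : ℕ) (α : A → Fin (Δ * s))
    (β : B → Fin d) (E : A → B → Prop) :
    SimpleGraph (GcVertex A B c t Δ s) :=
  SimpleGraph.fromRel (gcRel c t Δ s d α β E)

set_option maxHeartbeats 16000000 in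
/-- soundness of the product reduction.
Assume `s ≥ 2`, every color class `{v ∈ B : β v = b}` is nonempty, and every
`(Δ(s−1)+1)`-element subset of `A` has at most `m` common neighbors in `B`.
Under the numerical conditions `c·d^c/(3t) ≤ d^{1/(2Δs)}`, `m ≤ d^{1/(2s)}/3`
and `c·d^c + c·Δ^c·s^c·d^{c−1/2+1/(2s)} < 2·Δ^c·d^c`, every dominating set of
`G_c` has size `> c·d^c/3`. -/
theorem soundness_Gc {A B : Type*} [Fintype A] [Fintype B]
    (c t Δ s d : ℕ) (hc : 0 < c) (ht : 0 < t) (hΔ : 0 < Δ) (hs : 2 ≤ s)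
    (hd : 0 < d)
    (α : A → Fin (Δ * s)) (β : B → Fin d) (E : A → B → Prop)
    (hβsurj : ∀ b : Fin d, ∃ v : B, β v = b)
    (m : ℕ)
    (hcommon : ∀ S : Finset A, S.card = Δ * (s - 1) + 1 →
      {v : B | ∀ u ∈ S, E u v}.ncard ≤ m)
    (h1 : (c : ℝ) * (d : ℝ) ^ c / (3 * t) ≤
      (d : ℝ) ^ ((1 : ℝ) / (2 * Δ * s)))
    (h2 : (m : ℝ) ≤ (d : ℝ) ^ ((1 : ℝ) / (2 * s)) / 3)
    (h3 : (c : ℝ) * (d : ℝ) ^ c +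
        (c : ℝ) * (Δ : ℝ) ^ c * (s : ℝ) ^ c *
          (d : ℝ) ^ ((c : ℝ) - 1 / 2 + 1 / (2 * s)) <
      2 * (Δ : ℝ) ^ c * (d : ℝ) ^ c)
    (D : Set (GcVertex A B c t Δ s))
    (hD : IsDominatingSet (Gc c t Δ s d α β E) D) :
    (c : ℝ) * (d : ℝ) ^ c / 3 < (D.ncard : ℝ) := by
  classical
  by_contra hgoal
  push_neg at hgoal
  have hd0 : (0:ℝ) < (d:ℝ) := by exact_mod_cast hd
  have hd1 : (1:ℝ) ≤ (d:ℝ) := by exact_mod_cast hd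
  have hP0 : (0:ℝ) < (d:ℝ)^c := pow_pos hd0 c
  have hc0 : (0:ℝ) < (c:ℝ) := by exact_mod_cast hc
  have ht0 : (0:ℝ) < (t:ℝ) := by exact_mod_cast ht
  have hDfin : D.Finite := Set.toFinite D
  set F : Finset (GcVertex A B c t Δ s) := hDfin.toFinset with hFdef
  have hFD : ∀ x, x ∈ F ↔ x ∈ D := fun x => hDfin.mem_toFinset
  have hn : (F.card : ℝ) ≤ (c:ℝ) * (d:ℝ)^c / 3 := by
    rw [← Set.ncard_eq_toFinset_card D hDfin]; exact hgoal
  choose vcl hvcl using hβsurj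
  -- class extractor
  set classOf : GcVertex A B c t Δ s → Option (Fin c → Fin d) :=
    Sum.elim (fun v => some (β ∘ v))
      (Sum.elim (fun _ => none) (fun p => some (β ∘ p.1))) with hclassOf
  -- ## Easy bound : d^c ≤ F.card
  have heasy : d ^ c ≤ F.card := by
    have hdomall : ∀ i' : Fin c → Fin d, ∃ x, x ∈ F ∧ classOf x = some i' := by
      intro i'
      have hv0 : β ∘ (fun ℓ => vcl (i' ℓ)) = i' := funext fun ℓ => hvcl (i' ℓ)
      rcases hD (Sum.inl (fun ℓ => vcl (i' ℓ))) with h | ⟨u, hu, huadj⟩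
      · exact ⟨_, (hFD _).2 h, by simp [hclassOf, hv0]⟩
      · simp only [Gc, SimpleGraph.fromRel_adj] at huadj
        obtain ⟨-, hrel⟩ := huadj
        rcases u with v' | p | p
        · refine ⟨Sum.inl v', (hFD _).2 hu, ?_⟩
          have hβv' : β ∘ v' = i' := by
            rcases hrel with h' | h'
            · simp only [gcRel] at h'
              rw [h'.2, hv0]
            · simp only [gcRel] at h'
              rw [← h'.2, hv0]
          simp [hclassOf, hβv']
        · exfalso
          rcases hrel with h' | h' <;> simp [gcRel] at h'
        · refine ⟨Sum.inr (Sum.inr p), (hFD _).2 hu, ?_⟩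
          obtain ⟨v', j', i''⟩ := p
          have hβv' : β ∘ v' = i' := by
            rcases hrel with h' | h'
            · simp only [gcRel] at h'
              rw [h'.1, hv0]
            · exfalso; simp [gcRel] at h'
          simp [hclassOf, hβv']
    choose dom hdomF hdomc using hdomall
    calc d ^ c = (Finset.univ : Finset (Fin c → Fin d)).card := by
          simp [Finset.card_univ, Fintype.card_fun]
      _ ≤ F.card := Finset.card_le_card_of_injOn dom (fun i' _ => hdomF i')
          (fun a _ b _ hab => by
            have := (hdomc a).symm.trans (hab ▸ hdomc b)
            exact Option.some.inj this)
  have hPn : (d:ℝ)^c ≤ (F.card:ℝ) := by exact_mod_cast heasy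
  have hc3 : 3 ≤ c := by
    have h3R : (3:ℝ) ≤ (c:ℝ) := by nlinarith
    exact_mod_cast h3R
  -- ## pigeonhole on t
  set idx : GcVertex A B c t Δ s → Option (Fin t) :=
    Sum.elim (fun _ => none) (Sum.elim (fun p => some p.2.2) (fun p => some p.2.2)) with hidx
  set DI : Fin t → Finset (GcVertex A B c t Δ s) :=
    fun i => F.filter (fun x => idx x = some i) with hDI
  have hsumDI : ∑ i : Fin t, (DI i).card ≤ F.card := by
    rw [← Finset.card_biUnion]
    · exact Finset.card_le_card (Finset.biUnion_subset.mpr fun i _ =>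
        Finset.filter_subset _ _)
    · intro x _ y _ hxy
      simp only [Finset.disjoint_left, hDI, Finset.mem_filter]
      rintro a ⟨-, h1'⟩ ⟨-, h2'⟩
      rw [h1'] at h2'
      exact hxy (Option.some.inj h2')
  obtain ⟨i0, -, hi0min⟩ := Finset.exists_min_image Finset.univ
    (fun i => (DI i).card) ⟨⟨0, ht⟩, Finset.mem_univ _⟩
  have hti0 : t * (DI i0).card ≤ F.card := by
    calc t * (DI i0).card = ∑ _i : Fin t, (DI i0).card := by
          simp [Finset.sum_const, Finset.card_univ, mul_comm]
      _ ≤ ∑ i : Fin t, (DI i).card :=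
          Finset.sum_le_sum fun i _ => hi0min i (Finset.mem_univ i)
      _ ≤ F.card := hsumDI
  set κ : ℝ := (d:ℝ) ^ ((1:ℝ)/(2*Δ*s)) with hκ
  have hκnn : 0 ≤ κ := Real.rpow_nonneg hd0.le _
  have hDIκ : ((DI i0).card : ℝ) ≤ κ := by
    have h' : (t:ℝ) * (DI i0).card ≤ (F.card:ℝ) := by exact_mod_cast hti0
    have h'' : ((DI i0).card:ℝ) ≤ (c:ℝ)*(d:ℝ)^c/(3*t) := by
      rw [le_div_iff₀ (by positivity)]
      nlinarith
    linarith [h1]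
  -- ## S and O
  set S : Fin c → Finset A := fun ℓ =>
    Finset.univ.filter (fun u => (Sum.inr (Sum.inl (u, ℓ, i0)) : GcVertex A B c t Δ s) ∈ D) with hS
  have hScard : ∀ ℓ, ((S ℓ).card : ℝ) ≤ κ := by
    intro ℓ
    refine le_trans ?_ hDIκ
    have : (S ℓ).card ≤ (DI i0).card := by
      apply Finset.card_le_card_of_injOn
        (fun u => (Sum.inr (Sum.inl (u, ℓ, i0)) : GcVertex A B c t Δ s))
      · intro u hu
        simp only [hS, Finset.mem_coe, Finset.mem_filter, Finset.mem_univ, true_and] at hu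
        simp only [hDI, Finset.mem_coe, Finset.mem_filter]
        exact ⟨(hFD _).2 hu, by simp [hidx]⟩
      · intro a _ b _ hab
        simpa using hab
    exact_mod_cast this
  set q : ℕ := Δ * (s-1) + 1 with hq
  have hqΔs : q ≤ Δ * s := by
    have hs1 : s - 1 + 1 = s := by omega
    have h' : Δ*(s-1)+1 ≤ Δ*(s-1)+Δ := by omega
    calc q = Δ*(s-1)+1 := hq
      _ ≤ Δ*(s-1)+Δ := h'
      _ = Δ*((s-1)+1) := by ring
      _ = Δ*s := by rw [hs1]
  set O : Fin c → Finset B := fun ℓ =>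
    Finset.univ.filter (fun b => q ≤ (((S ℓ).filter (fun u => E u b)).image α).card) with hO
  have hOcard : ∀ ℓ, ((O ℓ).card : ℝ) ≤ κ^q * m := by
    intro ℓ
    have hsubO : O ℓ ⊆ ((S ℓ).powersetCard q).biUnion
        (fun T => Finset.univ.filter (fun b => ∀ u ∈ T, E u b)) := by
      intro b hb
      simp only [hO, Finset.mem_filter, Finset.mem_univ, true_and] at hb
      have hh : q ≤ ((S ℓ).filter (fun u => E u b)).card :=
        le_trans hb Finset.card_image_le
      obtain ⟨T, hT, hTcard⟩ := Finset.exists_subset_card_eq hh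
      refine Finset.mem_biUnion.mpr ⟨T, Finset.mem_powersetCard.mpr
        ⟨hT.trans (Finset.filter_subset _ _), hTcard⟩, ?_⟩
      simp only [Finset.mem_filter, Finset.mem_univ, true_and]
      intro u hu
      exact (Finset.mem_filter.mp (hT hu)).2
    have hcount : (O ℓ).card ≤ ((S ℓ).card.choose q) * m := by
      calc (O ℓ).card ≤ _ := Finset.card_le_card hsubO
        _ ≤ ∑ T ∈ (S ℓ).powersetCard q,
            (Finset.univ.filter (fun b => ∀ u ∈ T, E u b)).card := Finset.card_biUnion_le
        _ ≤ ∑ _T ∈ (S ℓ).powersetCard q, m := by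
            apply Finset.sum_le_sum
            intro T hT
            have hTc : T.card = Δ * (s - 1) + 1 := (Finset.mem_powersetCard.mp hT).2
            have hcm := hcommon T hTc
            have he : (Finset.univ.filter (fun b => ∀ u ∈ T, E u b)).card
                = {v : B | ∀ u ∈ T, E u v}.ncard := by
              rw [Set.ncard_eq_toFinset_card']
              congr 1
              simp [Set.toFinset_setOf]
            rw [he]; exact hcm
        _ = ((S ℓ).card.choose q) * m := by
            rw [Finset.sum_const, Finset.card_powersetCard, smul_eq_mul]
    calc ((O ℓ).card : ℝ) ≤ (((S ℓ).card.choose q) * m : ℕ) := by exact_mod_cast hcount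
      _ ≤ ((S ℓ).card:ℝ)^q * m := by
          push_cast
          apply mul_le_mul_of_nonneg_right _ (Nat.cast_nonneg m)
          exact_mod_cast Nat.choose_le_pow (S ℓ).card q
      _ ≤ κ^q * m := by
          apply mul_le_mul_of_nonneg_right _ (Nat.cast_nonneg m)
          exact pow_le_pow_left₀ (Nat.cast_nonneg _) (hScard ℓ) q
  set M0 : ℝ := (d:ℝ)^((1:ℝ)/2) * ((d:ℝ)^((1:ℝ)/(2*s))/3) with hM0
  have hM0nn : 0 ≤ M0 := by
    rw [hM0]; positivity
  have hOM : ∀ ℓ, ((O ℓ).card : ℝ) ≤ M0 := by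
    intro ℓ
    have hκq : κ^q ≤ (d:ℝ)^((1:ℝ)/2) := by
      rw [hκ, ← Real.rpow_natCast ((d:ℝ)^((1:ℝ)/(2*Δ*s))) q, ← Real.rpow_mul hd0.le]
      apply Real.rpow_le_rpow_of_exponent_le hd1
      rw [div_mul_eq_mul_div, one_mul, div_le_div_iff₀ (by positivity) (by norm_num)]
      have hcast : (q:ℝ) ≤ (Δ:ℝ) * (s:ℝ) := by exact_mod_cast hqΔs
      nlinarith
    calc ((O ℓ).card:ℝ) ≤ κ^q * m := hOcard ℓ
      _ ≤ (d:ℝ)^((1:ℝ)/2) * ((d:ℝ)^((1:ℝ)/(2*s))/3) := by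
          apply mul_le_mul hκq h2 (Nat.cast_nonneg m) (Real.rpow_nonneg hd0.le _)
      _ = M0 := hM0.symm
  -- ## inl vertices and reps
  set Dinl : Finset (Fin c → B) :=
    Finset.univ.filter (fun v => (Sum.inl v : GcVertex A B c t Δ s) ∈ D) with hDinl
  have hDinlcard : Dinl.card ≤ F.card := by
    apply Finset.card_le_card_of_injOn (fun v => (Sum.inl v : GcVertex A B c t Δ s))
    · intro v hv
      simp only [hDinl, Finset.mem_coe, Finset.mem_filter, Finset.mem_univ, true_and] at hv
      exact (hFD _).2 hv
    · intro a _ b _ hab; simpa using hab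
  set reps : (Fin c → Fin d) → Finset (Fin c → B) :=
    fun i' => Dinl.filter (fun v => β ∘ v = i') with hreps
  -- ## bad and good classes
  set FB : Fin c → Finset (Fin d) := fun ℓ =>
    Finset.univ.filter (fun b0 => ∀ x : B, β x = b0 → x ∈ O ℓ) with hFB
  have hFBcard : ∀ ℓ, (FB ℓ).card ≤ (O ℓ).card := by
    intro ℓ
    apply Finset.card_le_card_of_injOn (fun b0 => vcl b0)
    · intro b0 hb0
      simp only [hFB, Finset.mem_coe, Finset.mem_filter, Finset.mem_univ, true_and] at hb0
      exact hb0 (vcl b0) (hvcl b0)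
    · intro a _ b _ hab
      have hab' : vcl a = vcl b := hab
      rw [← hvcl a, ← hvcl b, hab']
  set Oim : Fin c → Finset (Fin d) := fun ℓ => (O ℓ).image β with hOim
  set B1 : Finset (Fin c → Fin d) :=
    Finset.univ.filter (fun i' => ∃ ℓ, i' ℓ ∈ FB ℓ) with hB1
  set B2 : Finset (Fin c → Fin d) :=
    Finset.univ.filter (fun i' => ∃ ℓ₁ ℓ₂, ℓ₁ ≠ ℓ₂ ∧ i' ℓ₁ ∈ Oim ℓ₁ ∧ i' ℓ₂ ∈ Oim ℓ₂) with hB2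
  set Hv : Finset (Fin c → Fin d) :=
    Finset.univ.filter (fun i' => c ≤ (reps i').card) with hHv
  set Gd : Finset (Fin c → Fin d) :=
    Finset.univ.filter (fun i' => ∃ v : Fin c → B, β ∘ v = i' ∧ (∀ ℓ, v ℓ ∉ O ℓ) ∧
      (∀ v' ∈ reps i', ∃ ℓ, v ℓ = v' ℓ)) with hGd
  -- ## covering
  have hcover : (Finset.univ : Finset (Fin c → Fin d)) ⊆ Gd ∪ B1 ∪ B2 ∪ Hv := by
    intro i' _
    simp only [Finset.mem_union]
    by_cases hb1 : i' ∈ B1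
    · tauto
    by_cases hb2 : i' ∈ B2
    · tauto
    by_cases hhv : i' ∈ Hv
    · tauto
    refine Or.inl (Or.inl (Or.inl ?_))
    simp only [hGd, Finset.mem_filter, Finset.mem_univ, true_and]
    -- good values at each coordinate
    have hgood : ∀ ℓ, ∃ x : B, β x = i' ℓ ∧ x ∉ O ℓ := by
      intro ℓ
      by_contra hcon
      push_neg at hcon
      apply hb1
      simp only [hB1, Finset.mem_filter, Finset.mem_univ, true_and]
      refine ⟨ℓ, ?_⟩
      simp only [hFB, Finset.mem_filter, Finset.mem_univ, true_and]
      exact fun x hx => hcon x hx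
    choose gv hgv1 hgv2 using hgood
    have hrepsc : (reps i').card < c := by
      by_contra hcon
      push_neg at hcon
      exact hhv (by simp only [hHv, Finset.mem_filter, Finset.mem_univ, true_and]; exact hcon)
    -- Hall condition
    have hhall : ∀ (sset : Finset {x // x ∈ reps i'}),
        sset.card ≤ (sset.biUnion (fun r =>
          Finset.univ.filter (fun ℓ => r.1 ℓ ∉ O ℓ))).card := by
      intro sset
      by_contra hcon
      push_neg at hcon
      obtain ⟨r, hr⟩ : sset.Nonempty := Finset.card_pos.mp (by omega)
      have h1' : (Finset.univ.filter (fun ℓ => r.1 ℓ ∉ O ℓ)).card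
          ≤ (sset.biUnion (fun r => Finset.univ.filter (fun ℓ => r.1 ℓ ∉ O ℓ))).card :=
        Finset.card_le_card (Finset.subset_biUnion_of_mem (fun r => Finset.univ.filter (fun ℓ => r.1 ℓ ∉ O ℓ)) hr)
      have hsetcard : sset.card ≤ (reps i').card := by
        calc sset.card ≤ (Finset.univ : Finset {x // x ∈ reps i'}).card :=
              Finset.card_le_card (Finset.subset_univ sset)
          _ = (reps i').card := by rw [Finset.card_univ, Fintype.card_coe]
      have hsplit : (Finset.univ.filter (fun ℓ => r.1 ℓ ∈ O ℓ)).card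
          + (Finset.univ.filter (fun ℓ => r.1 ℓ ∉ O ℓ)).card = c := by
        rw [Finset.card_filter_add_card_filter_not]
        simp
      have h2' : 1 < (Finset.univ.filter (fun ℓ => r.1 ℓ ∈ O ℓ)).card := by omega
      obtain ⟨ℓ₁, hℓ₁, ℓ₂, hℓ₂, hne⟩ := Finset.one_lt_card.mp h2'
      simp only [Finset.mem_filter, Finset.mem_univ, true_and] at hℓ₁ hℓ₂
      apply hb2
      simp only [hB2, Finset.mem_filter, Finset.mem_univ, true_and]
      have hri' : β ∘ r.1 = i' := by
        have hr2 := r.2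
        simp only [hreps, Finset.mem_filter] at hr2
        exact hr2.2
      refine ⟨ℓ₁, ℓ₂, hne, ?_, ?_⟩
      · rw [← congrFun hri' ℓ₁]
        simp only [hOim]
        exact Finset.mem_image_of_mem β hℓ₁
      · rw [← congrFun hri' ℓ₂]
        simp only [hOim]
        exact Finset.mem_image_of_mem β hℓ₂
    obtain ⟨fS, hfSinj, hfSmem⟩ :=
      (Finset.all_card_le_biUnion_card_iff_exists_injective _).mp hhall
    refine ⟨fun ℓ => if h : ∃ r : {x // x ∈ reps i'}, fS r = ℓ
      then h.choose.1 ℓ else gv ℓ, ?_, ?_, ?_⟩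
    · funext ℓ
      simp only [Function.comp_apply]
      split_ifs with h
      · have hmem := h.choose.2
        simp only [hreps, Finset.mem_filter] at hmem
        exact congrFun hmem.2 ℓ
      · exact hgv1 ℓ
    · intro ℓ
      simp only []
      split_ifs with h
      · have hsp := h.choose_spec
        have hmem := hfSmem h.choose
        simp only [Finset.mem_filter, Finset.mem_univ, true_and] at hmem
        rwa [hsp] at hmem
      · exact hgv2 ℓ
    · intro v' hv'
      refine ⟨fS ⟨v', hv'⟩, ?_⟩
      have hex : ∃ r : {x // x ∈ reps i'}, fS r = fS ⟨v', hv'⟩ := ⟨⟨v', hv'⟩, rfl⟩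
      simp only []
      rw [dif_pos hex]
      have heq : hex.choose = ⟨v', hv'⟩ := hfSinj hex.choose_spec
      rw [heq]
  -- ## good classes give W-vertices of D
  have hGdDI : Gd.card ≤ (DI i0).card := by
    have hch : ∀ i' ∈ Gd, ∃ vj : (Fin c → B) × (Fin c → Fin (Δ*s)),
        β ∘ vj.1 = i' ∧ (Sum.inr (Sum.inr (vj.1, vj.2, i0)) : GcVertex A B c t Δ s) ∈ D := by
      intro i' hi'
      rw [hGd] at hi'
      obtain ⟨v, hv1, hv2, hv3⟩ := (Finset.mem_filter.mp hi').2
      have hfree : ∀ ℓ, ∃ a : Fin (Δ*s), ¬∃ u ∈ S ℓ, E u (v ℓ) ∧ α u = a := by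
        intro ℓ
        have hvO := hv2 ℓ
        have hnq : ¬ q ≤ (((S ℓ).filter (fun u => E u (v ℓ))).image α).card := by
          intro hcon
          apply hvO
          simp only [hO, Finset.mem_filter, Finset.mem_univ, true_and]
          exact hcon
        push_neg at hnq
        by_contra hcon
        push_neg at hcon
        have hsub2 : (Finset.univ : Finset (Fin (Δ*s))) ⊆
            ((S ℓ).filter (fun u => E u (v ℓ))).image α := by
          intro a _
          obtain ⟨u, hu, hE, hα⟩ := hcon a
          exact Finset.mem_image.mpr ⟨u, Finset.mem_filter.mpr ⟨hu, hE⟩, hα⟩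
        have hcard2 := Finset.card_le_card hsub2
        rw [Finset.card_univ, Fintype.card_fin] at hcard2
        omega
      choose jf hjf using hfree
      refine ⟨(v, jf), hv1, ?_⟩
      rcases hD (Sum.inr (Sum.inr (v, jf, i0))) with h | ⟨u, hu, huadj⟩
      · exact h
      · exfalso
        simp only [Gc, SimpleGraph.fromRel_adj] at huadj
        obtain ⟨-, hrel⟩ := huadj
        rcases u with v' | p | p
        · rcases hrel with h' | h'
          · simp [gcRel] at h'
          · simp only [gcRel] at h'
            obtain ⟨hβeq, hdiff⟩ := h'
            have hv'reps : v' ∈ reps i' := by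
              simp only [hreps, hDinl, Finset.mem_filter, Finset.mem_univ, true_and]
              exact ⟨hu, by rw [← hβeq, hv1]⟩
            obtain ⟨ℓ, hℓ⟩ := hv3 v' hv'reps
            exact hdiff ℓ hℓ
        · obtain ⟨u', ℓ', i''⟩ := p
          rcases hrel with h' | h'
          · simp only [gcRel] at h'
            obtain ⟨hi'', hE, hjα⟩ := h'
            subst hi''
            refine hjf ℓ' ⟨u', ?_, hE, hjα.symm⟩
            simp only [hS, Finset.mem_filter, Finset.mem_univ, true_and]
            exact hu
          · simp [gcRel] at h'
        · rcases hrel with h' | h' <;> simp [gcRel] at h'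
    choose vj hvj1 hvj2 using hch
    apply Finset.card_le_card_of_injOn (fun i' =>
      if h : i' ∈ Gd then
        (Sum.inr (Sum.inr ((vj i' h).1, (vj i' h).2, i0)) : GcVertex A B c t Δ s)
      else Sum.inl (fun _ => vcl (i' ⟨0, hc⟩)))
    · intro i' hi'
      simp only [Finset.mem_coe] at hi' ⊢
      rw [dif_pos hi']
      simp only [hDI, Finset.mem_filter]
      exact ⟨(hFD _).2 (hvj2 i' hi'), by simp [hidx]⟩
    · intro a ha b hb hab
      simp only [Finset.mem_coe] at ha hb
      dsimp only at hab
      rw [dif_pos ha, dif_pos hb] at hab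
      simp only [Sum.inr.injEq, Prod.mk.injEq] at hab
      rw [← hvj1 a ha, ← hvj1 b hb, hab.1]
  -- ## counting bounds
  have hcards : d^c ≤ Gd.card + B1.card + B2.card + Hv.card := by
    calc d ^ c = (Finset.univ : Finset (Fin c → Fin d)).card := by
          simp [Finset.card_univ, Fintype.card_fun]
      _ ≤ (Gd ∪ B1 ∪ B2 ∪ Hv).card := Finset.card_le_card hcover
      _ ≤ (Gd ∪ B1 ∪ B2).card + Hv.card := Finset.card_union_le _ _
      _ ≤ (Gd ∪ B1).card + B2.card + Hv.card := by
          have := Finset.card_union_le (Gd ∪ B1) B2; omega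
      _ ≤ Gd.card + B1.card + B2.card + Hv.card := by
          have := Finset.card_union_le Gd B1; omega
  have hB1n : B1.card ≤ ∑ ℓ : Fin c, (FB ℓ).card * d^(c-1) := by
    calc B1.card ≤ (Finset.univ.biUnion (fun ℓ => Finset.univ.filter
          (fun i' : Fin c → Fin d => i' ℓ ∈ FB ℓ))).card := by
          apply Finset.card_le_card
          intro i' hi'
          rw [hB1] at hi'
          obtain ⟨ℓ, hℓ⟩ := (Finset.mem_filter.mp hi').2
          exact Finset.mem_biUnion.mpr ⟨ℓ, Finset.mem_univ _,
            Finset.mem_filter.mpr ⟨Finset.mem_univ _, hℓ⟩⟩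
      _ ≤ ∑ ℓ : Fin c, (Finset.univ.filter (fun i' : Fin c → Fin d => i' ℓ ∈ FB ℓ)).card :=
          Finset.card_biUnion_le
      _ ≤ ∑ ℓ : Fin c, (FB ℓ).card * d^(c-1) :=
          Finset.sum_le_sum fun ℓ _ => count_one ℓ (FB ℓ)
  have hB1R : (B1.card : ℝ) ≤ (c:ℝ) * M0 * ((d:ℝ)^(c-1)) := by
    have hcast : (B1.card : ℝ) ≤ ∑ ℓ : Fin c, ((FB ℓ).card : ℝ) * ((d:ℝ)^(c-1)) := by
      exact_mod_cast hB1n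
    calc (B1.card:ℝ) ≤ _ := hcast
      _ ≤ ∑ _ℓ : Fin c, M0 * ((d:ℝ)^(c-1)) := Finset.sum_le_sum (fun ℓ _ =>
          mul_le_mul_of_nonneg_right
            (le_trans (by exact_mod_cast hFBcard ℓ) (hOM ℓ)) (by positivity))
      _ = (c:ℝ) * M0 * ((d:ℝ)^(c-1)) := by
          rw [Finset.sum_const, Finset.card_univ, Fintype.card_fin, nsmul_eq_mul]; ring
  have hB2n : B2.card ≤ ∑ p ∈ (Finset.univ : Finset (Fin c)).offDiag,
      (Oim p.1).card * (Oim p.2).card * d^(c-2) := by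
    calc B2.card ≤ ((Finset.univ : Finset (Fin c)).offDiag.biUnion
          (fun p => Finset.univ.filter (fun i' : Fin c → Fin d =>
            i' p.1 ∈ Oim p.1 ∧ i' p.2 ∈ Oim p.2))).card := by
          apply Finset.card_le_card
          intro i' hi'
          rw [hB2] at hi'
          obtain ⟨ℓ₁, ℓ₂, hne, ha, hb⟩ := (Finset.mem_filter.mp hi').2
          exact Finset.mem_biUnion.mpr ⟨(ℓ₁,ℓ₂), Finset.mem_offDiag.mpr
            ⟨Finset.mem_univ _, Finset.mem_univ _, hne⟩,
            Finset.mem_filter.mpr ⟨Finset.mem_univ _, ha, hb⟩⟩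
      _ ≤ ∑ p ∈ (Finset.univ : Finset (Fin c)).offDiag,
          (Finset.univ.filter (fun i' : Fin c → Fin d =>
            i' p.1 ∈ Oim p.1 ∧ i' p.2 ∈ Oim p.2)).card := Finset.card_biUnion_le
      _ ≤ _ := Finset.sum_le_sum fun p hp =>
          count_two p.1 p.2 (Finset.mem_offDiag.mp hp).2.2 (Oim p.1) (Oim p.2)
  have hB2R : (B2.card : ℝ) ≤ ((c:ℝ) * (c:ℝ)) * (M0 * M0) * ((d:ℝ)^(c-2)) := by
    have hOimM : ∀ ℓ, ((Oim ℓ).card : ℝ) ≤ M0 := fun ℓ => le_trans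
      (by exact_mod_cast (Finset.card_image_le : ((O ℓ).image β).card ≤ (O ℓ).card)) (hOM ℓ)
    have h' : (B2.card : ℝ) ≤ ∑ p ∈ (Finset.univ : Finset (Fin c)).offDiag,
        ((Oim p.1).card : ℝ) * ((Oim p.2).card) * ((d:ℝ)^(c-2)) := by exact_mod_cast hB2n
    have hdp : (0:ℝ) ≤ (d:ℝ)^(c-2) := by positivity
    calc (B2.card:ℝ) ≤ _ := h'
      _ ≤ ∑ _p ∈ (Finset.univ : Finset (Fin c)).offDiag, M0 * M0 * ((d:ℝ)^(c-2)) :=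
          Finset.sum_le_sum (fun p _ => mul_le_mul_of_nonneg_right
            (mul_le_mul (hOimM p.1) (hOimM p.2) (Nat.cast_nonneg _) hM0nn) hdp)
      _ ≤ ((c:ℝ)*(c:ℝ)) * (M0*M0) * ((d:ℝ)^(c-2)) := by
          rw [Finset.sum_const, nsmul_eq_mul]
          have hoc : (((Finset.univ : Finset (Fin c)).offDiag.card : ℝ)) ≤ (c:ℝ)*(c:ℝ) := by
            have h'' : (Finset.univ : Finset (Fin c)).offDiag.card ≤ c * c := by
              rw [Finset.offDiag_card, Finset.card_univ, Fintype.card_fin]; omega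
            exact_mod_cast h''
          have hnn : (0:ℝ) ≤ M0*M0*((d:ℝ)^(c-2)) := by positivity
          nlinarith
  have hHvR : (Hv.card : ℝ) ≤ (d:ℝ)^c / 3 := by
    have hHvn : c * Hv.card ≤ F.card := by
      calc c * Hv.card = ∑ _i' ∈ Hv, c := by rw [Finset.sum_const, smul_eq_mul, mul_comm]
        _ ≤ ∑ i' ∈ Hv, (reps i').card := Finset.sum_le_sum (fun i' hi' => by
            rw [hHv] at hi'; exact (Finset.mem_filter.mp hi').2)
        _ = (Hv.biUnion reps).card := (Finset.card_biUnion (by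
            intro x _ y _ hxy
            simp only [hreps, Finset.disjoint_left, Finset.mem_filter]
            rintro a ⟨-, h1'⟩ ⟨-, h2'⟩
            exact hxy (h1'.symm.trans h2'))).symm
        _ ≤ Dinl.card := Finset.card_le_card (Finset.biUnion_subset.mpr (fun i' _ => by
            rw [hreps]; exact Finset.filter_subset _ _))
        _ ≤ F.card := hDinlcard
    have h' : (c:ℝ) * Hv.card ≤ (c:ℝ) * ((d:ℝ)^c/3) := by
      calc (c:ℝ) * Hv.card ≤ (F.card:ℝ) := by exact_mod_cast hHvn
        _ ≤ (c:ℝ)*(d:ℝ)^c/3 := hn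
        _ = (c:ℝ)*((d:ℝ)^c/3) := by ring
    exact le_of_mul_le_mul_left h' hc0
  -- ## numeric endgame
  have hc3R : (3:ℝ) ≤ (c:ℝ) := by exact_mod_cast hc3
  set P : ℝ := (d:ℝ)^c with hP
  set X : ℝ := (c:ℝ) * M0 * ((d:ℝ)^(c-1)) with hX
  have hXnn : 0 ≤ X := by rw [hX]; positivity
  have h3M0 : (d:ℝ)^((1:ℝ)/2) * (d:ℝ)^((1:ℝ)/(2*s)) = 3 * M0 := by rw [hM0]; ring
  have hsplit : (d:ℝ)^((c:ℝ)-1/2+1/(2*(s:ℝ))) = (d:ℝ)^(c-1) * (3*M0) := by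
    rw [← h3M0, ← Real.rpow_natCast (d:ℝ) (c-1)]
    rw [← Real.rpow_add hd0, ← Real.rpow_add hd0]
    congr 1
    have hc1 : ((c-1:ℕ):ℝ) = (c:ℝ) - 1 := by
      rw [Nat.cast_sub (by omega : 1 ≤ c)]; norm_num
    rw [hc1]; ring
  have hkey : (c:ℝ) * (s:ℝ)^c * ((d:ℝ)^(c-1) * (3*M0)) < 2 * P := by
    have hΔ0 : (0:ℝ) < (Δ:ℝ)^c := pow_pos (by exact_mod_cast hΔ) c
    rw [hsplit] at h3
    have hmid : (Δ:ℝ)^c * ((c:ℝ) * (s:ℝ)^c * ((d:ℝ)^(c-1) * (3*M0)))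
        < (Δ:ℝ)^c * (2 * P) := by nlinarith [mul_pos hc0 hP0]
    exact lt_of_mul_lt_mul_left hmid hΔ0.le
  have hs8 : (8:ℝ) ≤ (s:ℝ)^c := by
    calc (8:ℝ) = 2^3 := by norm_num
      _ ≤ (2:ℝ)^c := pow_le_pow_right₀ (by norm_num) hc3
      _ ≤ (s:ℝ)^c := pow_le_pow_left₀ (by norm_num) (by exact_mod_cast hs) c
  have hX12 : X < P / 12 := by
    have hring : (c:ℝ) * (s:ℝ)^c * ((d:ℝ)^(c-1) * (3*M0)) = 3 * ((s:ℝ)^c * X) := by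
      rw [hX]; ring
    rw [hring] at hkey
    nlinarith [mul_le_mul_of_nonneg_right hs8 hXnn]
  have hone : (1:ℝ) ≤ (d:ℝ)^((1:ℝ)/(2*(s:ℝ))) := by
    have := Real.rpow_le_rpow_of_exponent_le hd1
      (by positivity : (0:ℝ) ≤ (1:ℝ)/(2*(s:ℝ)))
    rwa [Real.rpow_zero] at this
  have hd145 : (145:ℝ) ≤ (d:ℝ) := by
    have hdc1 : (0:ℝ) < (d:ℝ)^(c-1) := pow_pos hd0 _
    have hrnn : (0:ℝ) ≤ (d:ℝ)^((1:ℝ)/2) := Real.rpow_nonneg hd0.le _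
    have hM0half : (d:ℝ)^((1:ℝ)/2) ≤ 3*M0 := by
      rw [← h3M0]
      nlinarith [hone, hrnn]
    have hPsplit : P = (d:ℝ) * (d:ℝ)^(c-1) := by
      rw [hP]
      conv_lhs => rw [show c = (c-1)+1 by omega]
      rw [pow_succ']
    have h2d' : ((c:ℝ)*(s:ℝ)^c*(d:ℝ)^((1:ℝ)/2)) * (d:ℝ)^(c-1)
        < (2*(d:ℝ)) * (d:ℝ)^(c-1) := by
      calc ((c:ℝ)*(s:ℝ)^c*(d:ℝ)^((1:ℝ)/2)) * (d:ℝ)^(c-1)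
          = (c:ℝ)*(s:ℝ)^c*((d:ℝ)^(c-1) * (d:ℝ)^((1:ℝ)/2)) := by ring
        _ ≤ (c:ℝ)*(s:ℝ)^c*((d:ℝ)^(c-1) * (3*M0)) := by
            apply mul_le_mul_of_nonneg_left
              (mul_le_mul_of_nonneg_left hM0half hdc1.le) (by positivity)
        _ < 2*P := hkey
        _ = (2*(d:ℝ))*(d:ℝ)^(c-1) := by rw [hPsplit]; ring
    have hdiv := lt_of_mul_lt_mul_right h2d' hdc1.le
    have hc24 : (24:ℝ) ≤ (c:ℝ)*(s:ℝ)^c := by nlinarith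
    have hrone : (1:ℝ) ≤ (d:ℝ)^((1:ℝ)/2) := by
      have := Real.rpow_le_rpow_of_exponent_le hd1 (by norm_num : (0:ℝ) ≤ (1:ℝ)/2)
      rwa [Real.rpow_zero] at this
    have hdd : (d:ℝ)^((1:ℝ)/2) * (d:ℝ)^((1:ℝ)/2) = (d:ℝ) := by
      rw [← Real.rpow_add hd0]; norm_num
    have hroot : (12:ℝ) < (d:ℝ)^((1:ℝ)/2) := by
      nlinarith [mul_le_mul_of_nonneg_right hc24 hrnn]
    have h144 : (144:ℝ) < (d:ℝ) := by nlinarith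
    have h144' : 144 < d := by exact_mod_cast h144
    have : (145:ℕ) ≤ d := by omega
    exact_mod_cast this
  have hκ14 : κ ≤ (d:ℝ)^((1:ℝ)/4) := by
    rw [hκ]
    apply Real.rpow_le_rpow_of_exponent_le hd1
    have h' : 2 ≤ Δ * s := le_trans hs (Nat.le_mul_of_pos_left s hΔ)
    have h'' : (2:ℝ) ≤ (Δ:ℝ)*(s:ℝ) := by exact_mod_cast h'
    have h2Δs : (4:ℝ) ≤ 2*(Δ:ℝ)*(s:ℝ) := by
      have heq : (2:ℝ)*(Δ:ℝ)*(s:ℝ) = 2*((Δ:ℝ)*(s:ℝ)) := by ring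
      rw [heq]; linarith
    exact one_div_le_one_div_of_le (by norm_num) h2Δs
  have hκP : κ ≤ P/41 := by
    have hr4nn : (0:ℝ) ≤ (d:ℝ)^((1:ℝ)/4) := Real.rpow_nonneg hd0.le _
    have ha : ((d:ℝ)^((1:ℝ)/4))^(4:ℕ) = (d:ℝ) := by
      rw [← Real.rpow_natCast ((d:ℝ)^((1:ℝ)/4)) 4, ← Real.rpow_mul hd0.le]
      norm_num
    have h41 : 41*((d:ℝ)^((1:ℝ)/4)) ≤ (d:ℝ) := by
      have hd3 : (145:ℝ)^3 ≤ (d:ℝ)^3 := pow_le_pow_left₀ (by norm_num) hd145 3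
      have h4 : (41*((d:ℝ)^((1:ℝ)/4)))^(4:ℕ) ≤ (d:ℝ)^(4:ℕ) := by
        rw [mul_pow, ha]
        have e1 : (d:ℝ)^(4:ℕ) = (d:ℝ)^(3:ℕ) * (d:ℝ) := by ring
        rw [e1]
        have e2 : (41:ℝ)^(4:ℕ) ≤ (d:ℝ)^(3:ℕ) := le_trans (by norm_num) hd3
        exact mul_le_mul_of_nonneg_right e2 hd0.le
      exact le_of_pow_le_pow_left₀ (by norm_num) hd0.le h4
    have hdc : (d:ℝ) ≤ P := by
      rw [hP]; exact le_self_pow₀ hd1 (by omega)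
    calc κ ≤ (d:ℝ)^((1:ℝ)/4) := hκ14
      _ ≤ (d:ℝ)/41 := by linarith
      _ ≤ P/41 := by linarith
  have hfin : P ≤ (Gd.card:ℝ) + B1.card + B2.card + Hv.card := by
    rw [hP]; exact_mod_cast hcards
  have hGdκ : (Gd.card:ℝ) ≤ κ := le_trans (by exact_mod_cast hGdDI) hDIκ
  have hpow2 : (d:ℝ)^(c-2) * (d:ℝ)^c = (d:ℝ)^(c-1) * (d:ℝ)^(c-1) := by
    rw [← pow_add, ← pow_add]; congr 1; omega
  have hB2X : ((c:ℝ)*(c:ℝ))*(M0*M0)*((d:ℝ)^(c-2)) * P = X * X := by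
    rw [hX, hP]
    linear_combination ((c:ℝ)*(c:ℝ)*(M0*M0)) * hpow2
  have hB2P : ((c:ℝ)*(c:ℝ))*(M0*M0)*((d:ℝ)^(c-2)) ≤ P/144 := by
    have h' : X * X ≤ (P/12)*(P/12) :=
      mul_le_mul hX12.le hX12.le hXnn (by positivity)
    rw [← hB2X] at h'
    nlinarith
  linarith [hfin, hGdκ, hκP, hB1R, hB2R, hB2P, hHvR, hX12, hXnn, hP0]
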